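/- For A ∈ M_{m×n}, the cross-dimensional operator norm ‖A‖_V := sup_{0≠x∈ℝ^∞} ‖A ⋉̄ x‖_V / ‖x‖_V equals sqrt((n/m)·σ_max(AᵀA)), where σ_max denotes the largest eigenvalue of AᵀA. In particular, when restricted to x ∈ ℝ^n, sup_{0≠x∈ℝ^n} ‖Ax‖_V/‖x‖_V = sqrt((n/m)·σ_max(AᵀA)). -/

import Mathlib

open scoped BigOperators
open Matrix

/-- `rep t x` is `x ⊗ 1_{t/m}`: each entry of `x ∈ ℝ^m` repeated `t/m` consecutive times. -/
noncomputable def rep (t : ℕ) {m : ℕ} (x : Fin m → ℝ) : Fin t → ℝ :=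
  fun i => if h : i.1 / (t / m) < m then x ⟨i.1 / (t / m), h⟩ else 0

/-- Cross-dimensional norm `‖x‖_V = sqrt((1/n) Σ xᵢ²)`. -/
noncomputable def vnorm {n : ℕ} (x : Fin n → ℝ) : ℝ :=
  Real.sqrt ((1 / (n : ℝ)) * ∑ i, x i ^ 2)

/-- Cross-dimensional inner product `⟨x,y⟩_V`. -/
noncomputable def vinner {m n : ℕ} (x : Fin m → ℝ) (y : Fin n → ℝ) : ℝ :=
  (1 / (Nat.lcm m n : ℝ)) * ∑ i, rep (Nat.lcm m n) x i * rep (Nat.lcm m n) y i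

/-- Cross-dimensional distance `d_V(x,y) = ‖x ⊖ y‖_V`. -/
noncomputable def dV {m n : ℕ} (x : Fin m → ℝ) (y : Fin n → ℝ) : ℝ :=
  vnorm (rep (Nat.lcm m n) x - rep (Nat.lcm m n) y)

/-- `onesRepMat m t` is `I_m ⊗ 1ᵀ_{t/m}` (an `m × t` matrix, for `m ∣ t`). -/
noncomputable def onesRepMat (m t : ℕ) : Matrix (Fin m) (Fin t) ℝ :=
  Matrix.of fun i j => if j.1 / (t / m) = i.1 then (1 : ℝ) else 0

/-- `PiMat n m` is the cross-dimensional projection matrix `Π^n_m : ℝ^n → ℝ^m`,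
`Π^n_m = (m/t)(I_m ⊗ 1ᵀ_{t/m})(I_n ⊗ 1_{t/n})`, `t = lcm(m,n)`. -/
noncomputable def PiMat (n m : ℕ) : Matrix (Fin m) (Fin n) ℝ :=
  ((m : ℝ) / (Nat.lcm m n : ℝ)) •
    (onesRepMat m (Nat.lcm m n) * (onesRepMat n (Nat.lcm m n)).transpose)

/-- `A ⊗ 1ᵀ_{t/n}` for `A ∈ M_{m×n}` (an `m × t` matrix). -/
noncomputable def repCols {m n : ℕ} (t : ℕ) (A : Matrix (Fin m) (Fin n) ℝ) :
    Matrix (Fin m) (Fin t) ℝ :=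
  Matrix.of fun i j => if h : j.1 / (t / n) < n then A i ⟨j.1 / (t / n), h⟩ else 0

/-- `B ⊗ 1_{t/p}` for `B ∈ M_{p×q}` (a `t × q` matrix). -/
noncomputable def repRows {p q : ℕ} (t : ℕ) (B : Matrix (Fin p) (Fin q) ℝ) :
    Matrix (Fin t) (Fin q) ℝ :=
  Matrix.of fun j l => if h : j.1 / (t / p) < p then B ⟨j.1 / (t / p), h⟩ l else 0

/-- Weighted dimension-keeping semi-tensor product
`A ⋉̄ B = (n/t)(A ⊗ 1ᵀ_{t/n})(B ⊗ 1_{t/p})`, `t = lcm(n,p)`. -/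
noncomputable def dkstp {m n p q : ℕ} (A : Matrix (Fin m) (Fin n) ℝ)
    (B : Matrix (Fin p) (Fin q) ℝ) : Matrix (Fin m) (Fin q) ℝ :=
  ((n : ℝ) / (Nat.lcm n p : ℝ)) • (repCols (Nat.lcm n p) A * repRows (Nat.lcm n p) B)

/-- Bridge matrix `Ψ_{n×p} = (n/t)(I_n ⊗ 1ᵀ_{t/n})(I_p ⊗ 1_{t/p})`, `t = lcm(n,p)`. -/
noncomputable def Psi (n p : ℕ) : Matrix (Fin n) (Fin p) ℝ :=
  ((n : ℝ) / (Nat.lcm n p : ℝ)) •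
    (onesRepMat n (Nat.lcm n p) * (onesRepMat p (Nat.lcm n p)).transpose)

/-- `A ⋉̄ x` for a vector `x ∈ ℝ^p`. -/
noncomputable def dkstpVec {m n p : ℕ} (A : Matrix (Fin m) (Fin n) ℝ) (x : Fin p → ℝ) :
    Fin m → ℝ :=
  ((n : ℝ) / (Nat.lcm n p : ℝ)) • (repCols (Nat.lcm n p) A).mulVec (rep (Nat.lcm n p) x)

lemma sum_fin_mul (n d : ℕ) (g : ℕ → ℝ) :
    ∑ j : Fin (n * d), g j.1 = ∑ a : Fin n, ∑ b : Fin d, g (b.1 + d * a.1) := by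
  rw [← Equiv.sum_comp finProdFinEquiv (fun j : Fin (n*d) => g j.1), Fintype.sum_prod_type]
  rfl

lemma sum_fin_eq {t n d : ℕ} (h : t = n * d) (g : ℕ → ℝ) :
    ∑ j : Fin t, g j.1 = ∑ a : Fin n, ∑ b : Fin d, g (b.1 + d * a.1) := by
  subst h; exact sum_fin_mul n d g

lemma div_add_mul' (b a d : ℕ) (hb : b < d) : (b + d * a) / d = a := by
  rw [Nat.add_mul_div_left _ _ (Nat.lt_of_le_of_lt (Nat.zero_le b) hb),
    Nat.div_eq_of_lt hb, Nat.zero_add]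

/-- block function -/
noncomputable def blk (p e : ℕ) (x : Fin p → ℝ) : ℕ → ℝ :=
  fun k => if h : k / e < p then x ⟨k / e, h⟩ else 0

lemma blk_apply (p e : ℕ) (he : 0 < e) (x : Fin p → ℝ) (a : Fin p) (b : Fin e) :
    blk p e x (b.1 + e * a.1) = x a := by
  unfold blk
  rw [div_add_mul' _ _ _ b.2]
  simp

lemma dkstp_eq (m n p : ℕ) (hn : 0 < n) (hp : 0 < p) (A : Matrix (Fin m) (Fin n) ℝ)
    (x : Fin p → ℝ) (d e : ℕ) (hd : Nat.lcm n p = n * d) (he : Nat.lcm n p = p * e)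
    (hd0 : 0 < d) (he0 : 0 < e) :
    dkstpVec A x = A.mulVec (fun a =>
      ((n : ℝ) / (Nat.lcm n p : ℝ)) * ∑ b : Fin d, blk p e x (b.1 + d * a.1)) := by
  funext i
  have htn : Nat.lcm n p / n = d := by rw [hd, Nat.mul_div_cancel_left _ hn]
  have htp : Nat.lcm n p / p = e := by rw [he, Nat.mul_div_cancel_left _ hp]
  show ((n : ℝ) / (Nat.lcm n p : ℝ)) * ((repCols (Nat.lcm n p) A).mulVec (rep (Nat.lcm n p) x) i)
      = _
  have hsum : (repCols (Nat.lcm n p) A).mulVec (rep (Nat.lcm n p) x) i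
      = ∑ a : Fin n, A i a * ∑ b : Fin d, blk p e x (b.1 + d * a.1) := by
    show ∑ j : Fin (Nat.lcm n p), repCols (Nat.lcm n p) A i j * rep (Nat.lcm n p) x j = _
    have hrw : ∀ j : Fin (Nat.lcm n p),
        repCols (Nat.lcm n p) A i j * rep (Nat.lcm n p) x j
        = (fun k : ℕ => (if h : k / d < n then A i ⟨k / d, h⟩ else 0) * blk p e x k) j.1 := by
      intro j
      simp only [repCols, rep, blk, Matrix.of_apply, htn, htp]
    rw [Finset.sum_congr rfl (fun j _ => hrw j)]
    refine (sum_fin_eq hd (fun k : ℕ => (if h : k / d < n then A i ⟨k / d, h⟩ else 0) * blk p e x k)).trans ?_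
    apply Finset.sum_congr rfl
    intro a _
    rw [Finset.mul_sum]
    apply Finset.sum_congr rfl
    intro b _
    rw [div_add_mul' _ _ _ b.2]
    simp [a.2]
  rw [hsum]
  show _ = ∑ a : Fin n, A i a * (((n : ℝ) / (Nat.lcm n p : ℝ)) * ∑ b : Fin d, blk p e x (b.1 + d * a.1))
  rw [Finset.mul_sum]
  apply Finset.sum_congr rfl
  intro a _
  ring

lemma vnorm_nonneg {k : ℕ} (x : Fin k → ℝ) : 0 ≤ vnorm x := Real.sqrt_nonneg _

lemma vnorm_pos {k : ℕ} (hk : 0 < k) (x : Fin k → ℝ) (hx : x ≠ 0) : 0 < vnorm x := by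
  apply Real.sqrt_pos.2
  have h1 : (0:ℝ) < 1 / (k:ℝ) := by positivity
  have h2 : 0 < ∑ i, x i ^ 2 := by
    obtain ⟨i, hi⟩ := Function.ne_iff.1 hx
    exact Finset.sum_pos' (fun j _ => sq_nonneg _)
      ⟨i, Finset.mem_univ i, by
        have := sq_nonneg (x i)
        rcases this.lt_or_eq with h | h
        · exact h
        · exact absurd (pow_eq_zero_iff (by norm_num) |>.1 h.symm) hi⟩
  exact mul_pos h1 h2

lemma vnorm_blocksum_le (n p : ℕ) (hn : 0 < n) (hp : 0 < p) (x : Fin p → ℝ)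
    (d e : ℕ) (hd : Nat.lcm n p = n * d) (he : Nat.lcm n p = p * e)
    (hd0 : 0 < d) (he0 : 0 < e) :
    vnorm (fun a : Fin n => ((n : ℝ) / (Nat.lcm n p : ℝ)) *
      ∑ b : Fin d, blk p e x (b.1 + d * a.1)) ≤ vnorm x := by
  set t := Nat.lcm n p with htdef
  have ht0 : 0 < t := Nat.lcm_pos hn hp
  have hcast : (t : ℝ) = (n : ℝ) * (d : ℝ) := by exact_mod_cast congrArg Nat.cast hd
  have hcast' : (t : ℝ) = (p : ℝ) * (e : ℝ) := by exact_mod_cast congrArg Nat.cast he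
  set g := blk p e x with hg
  set T := ∑ a : Fin n, ∑ b : Fin d, g (b.1 + d * a.1) ^ 2 with hT
  have hT0 : 0 ≤ T := Finset.sum_nonneg fun _ _ => Finset.sum_nonneg fun _ _ => sq_nonneg _
  have hTe : T = (e : ℝ) * ∑ i, x i ^ 2 := by
    have h1 : ∑ j : Fin t, (fun k : ℕ => g k ^ 2) j.1 = T :=
      sum_fin_eq hd (fun k : ℕ => g k ^ 2)
    have h2 : ∑ j : Fin t, (fun k : ℕ => g k ^ 2) j.1 = (e : ℝ) * ∑ i, x i ^ 2 := by
      refine (sum_fin_eq he (fun k : ℕ => g k ^ 2)).trans ?_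
      rw [Finset.mul_sum]
      apply Finset.sum_congr rfl
      intro a _
      have : ∀ b : Fin e, g (b.1 + e * a.1) ^ 2 = x a ^ 2 := fun b => by
        rw [hg, blk_apply p e he0 x a b]
      rw [Finset.sum_congr rfl (fun b _ => this b), Finset.sum_const, Finset.card_univ,
        Fintype.card_fin, nsmul_eq_mul]
    rw [← h1, h2]
  -- vnorm x = sqrt((1/t) * T)
  have hvx : vnorm x = Real.sqrt ((1 / (t : ℝ)) * T) := by
    unfold vnorm
    congr 1
    rw [hTe, hcast']
    have hp' : (p:ℝ) ≠ 0 := by positivity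
    have he' : (e:ℝ) ≠ 0 := by positivity
    field_simp
  rw [hvx]
  unfold vnorm
  apply Real.sqrt_le_sqrt
  have hstep : ∀ a : Fin n,
      (((n : ℝ) / (t : ℝ)) * ∑ b : Fin d, g (b.1 + d * a.1)) ^ 2
        ≤ ((n : ℝ) / (t : ℝ)) ^ 2 * ((d : ℝ) * ∑ b : Fin d, g (b.1 + d * a.1) ^ 2) := by
    intro a
    rw [mul_pow]
    apply mul_le_mul_of_nonneg_left _ (sq_nonneg _)
    have := sq_sum_le_card_mul_sum_sq (s := (Finset.univ : Finset (Fin d)))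
      (f := fun b : Fin d => g (b.1 + d * a.1))
    simpa using this
  calc (1 / (n : ℝ)) * ∑ a : Fin n, (((n : ℝ) / (t : ℝ)) * ∑ b : Fin d, g (b.1 + d * a.1)) ^ 2
      ≤ (1 / (n : ℝ)) * ∑ a : Fin n, ((n : ℝ) / (t : ℝ)) ^ 2 * ((d : ℝ) * ∑ b : Fin d, g (b.1 + d * a.1) ^ 2) := by
        apply mul_le_mul_of_nonneg_left (Finset.sum_le_sum fun a _ => hstep a) (by positivity)
    _ = (1 / (n : ℝ)) * (((n : ℝ) / (t : ℝ)) ^ 2 * (d : ℝ) * T) := by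
        rw [hT]
        simp only [Finset.mul_sum]
        apply Finset.sum_congr rfl
        intro a _
        apply Finset.sum_congr rfl
        intro b _
        ring
    _ = (1 / (t : ℝ)) * T := by
        have hn' : (n:ℝ) ≠ 0 := by positivity
        have ht' : (t:ℝ) ≠ 0 := by positivity
        have hd' : (d:ℝ) ≠ 0 := by positivity
        field_simp
        rw [hcast]

lemma dkstp_self (m n : ℕ) (hn : 0 < n) (A : Matrix (Fin m) (Fin n) ℝ) (x : Fin n → ℝ) :
    dkstpVec A x = A.mulVec x := by
  have h : Nat.lcm n n = n := Nat.lcm_self n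
  rw [dkstp_eq m n n hn hn A x 1 1 (by simp [h]) (by simp [h]) one_pos one_pos]
  have hw : (fun a : Fin n => ((n : ℝ) / (Nat.lcm n n : ℝ)) *
      ∑ b : Fin 1, blk n 1 x (b.1 + 1 * a.1)) = x := by
    funext a
    rw [Fin.sum_univ_one]
    have h1 : blk n 1 x ((0 : Fin 1).1 + 1 * a.1) = x a := by
      unfold blk
      simp [Nat.div_one, a.2, Fin.eta]
    rw [h1, h]
    have hn' : (n:ℝ) ≠ 0 := by positivity
    field_simp
  rw [hw]

lemma dot_sq_eq {k : ℕ} (u : Fin k → ℝ) : u ⬝ᵥ u = ∑ i, u i ^ 2 := by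
  simp [dotProduct, sq]

lemma mulVec_dot (m n : ℕ) (A : Matrix (Fin m) (Fin n) ℝ) (y : Fin n → ℝ) :
    A.mulVec y ⬝ᵥ A.mulVec y = y ⬝ᵥ (Aᵀ * A).mulVec y := by
  rw [← Matrix.mulVec_mulVec]
  conv_rhs => rw [Matrix.dotProduct_mulVec, Matrix.vecMul_transpose]

lemma quad_le {n : ℕ} (M : Matrix (Fin n) (Fin n) ℝ) (hM : M.IsHermitian) (σ : ℝ)
    (hub : ∀ i : Fin n, hM.eigenvalues i ≤ σ) (x : Fin n → ℝ) :
    x ⬝ᵥ M.mulVec x ≤ σ * (x ⬝ᵥ x) := by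
  set b := hM.eigenvectorBasis with hb
  set B : Fin n → Fin n → ℝ := fun i => ⇑(b i) with hB
  have hinner : ∀ u v : EuclideanSpace ℝ (Fin n), (inner ℝ u v : ℝ) = (u : Fin n → ℝ) ⬝ᵥ v := by
    intro u v; simp [PiLp.inner_apply, dotProduct, starRingEnd_apply, mul_comm]
  have hMT : Mᵀ = M := by
    ext i j; simpa using congrFun (congrFun hM i) j
  have key : ∀ u : Fin n → ℝ,
      u ⬝ᵥ M.mulVec u = ∑ i, hM.eigenvalues i * (B i ⬝ᵥ u) ^ 2 := by
    intro u
    have h1 := b.sum_inner_mul_inner (WithLp.toLp 2 u) (WithLp.toLp 2 (M.mulVec u))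
    rw [hinner] at h1
    simp only [hinner, WithLp.ofLp_toLp] at h1
    rw [← h1]
    apply Finset.sum_congr rfl
    intro i _
    show u ⬝ᵥ B i * (B i ⬝ᵥ M.mulVec u) = hM.eigenvalues i * (B i ⬝ᵥ u) ^ 2
    have h2 : B i ⬝ᵥ M.mulVec u = hM.eigenvalues i * (B i ⬝ᵥ u) := by
      rw [Matrix.dotProduct_mulVec, ← Matrix.mulVec_transpose, hMT, hB]
      rw [hM.mulVec_eigenvectorBasis, smul_dotProduct]
      rfl
    rw [h2, dotProduct_comm u]
    ring
  have hxx : ∑ i, (B i ⬝ᵥ x) ^ 2 = x ⬝ᵥ x := by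
    have h1 := b.sum_inner_mul_inner (WithLp.toLp 2 x) (WithLp.toLp 2 x)
    rw [hinner] at h1
    simp only [hinner, WithLp.ofLp_toLp] at h1
    rw [← h1]
    apply Finset.sum_congr rfl
    intro i _
    show (B i ⬝ᵥ x) ^ 2 = x ⬝ᵥ B i * (B i ⬝ᵥ x)
    rw [dotProduct_comm x]
    ring
  rw [key x, ← hxx, Finset.mul_sum]
  apply Finset.sum_le_sum
  intro i _
  exact mul_le_mul_of_nonneg_right (hub i) (sq_nonneg _)

lemma mulVec_vnorm_le (m n : ℕ) (hm : 0 < m) (hn : 0 < n) (A : Matrix (Fin m) (Fin n) ℝ)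
    (σmax : ℝ) (hσ0 : 0 ≤ σmax)
    (hq : ∀ y : Fin n → ℝ, y ⬝ᵥ (Aᵀ * A).mulVec y ≤ σmax * (y ⬝ᵥ y))
    (x : Fin n → ℝ) :
    vnorm (A.mulVec x) ≤ Real.sqrt ((n / m : ℝ) * σmax) * vnorm x := by
  unfold vnorm
  rw [← Real.sqrt_mul (by positivity)]
  apply Real.sqrt_le_sqrt
  have h1 : ∑ i, (A.mulVec x) i ^ 2 ≤ σmax * ∑ i, x i ^ 2 := by
    rw [← dot_sq_eq, ← dot_sq_eq, mulVec_dot]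
    exact hq x
  have hm' : (m:ℝ) ≠ 0 := by positivity
  have hn' : (n:ℝ) ≠ 0 := by positivity
  calc (1/(m:ℝ)) * ∑ i, (A.mulVec x) i ^ 2
      ≤ (1/(m:ℝ)) * (σmax * ∑ i, x i ^ 2) := by
        apply mul_le_mul_of_nonneg_left h1 (by positivity)
    _ = ((n/m:ℝ)*σmax) * ((1/(n:ℝ)) * ∑ i, x i ^ 2) := by field_simp

/-- The cross-dimensional operator norm of `A ∈ M_{m×n}` equals
`sqrt((n/m) σ_max(AᵀA))`, both as a sup over all of `ℝ^∞` and over `ℝ^n`. -/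
theorem stmt19 (m n : ℕ) (hm : 0 < m) (hn : 0 < n) (A : Matrix (Fin m) (Fin n) ℝ)
    (σmax : ℝ)
    (hσ : IsGreatest {μ : ℝ | ∃ v : Fin n → ℝ, v ≠ 0 ∧ (Aᵀ * A).mulVec v = μ • v} σmax) :
    IsLUB {r : ℝ | ∃ p : ℕ, 0 < p ∧ ∃ x : Fin p → ℝ, x ≠ 0 ∧
        r = vnorm (dkstpVec A x) / vnorm x}
      (Real.sqrt ((n / m : ℝ) * σmax)) ∧
    IsLUB {r : ℝ | ∃ x : Fin n → ℝ, x ≠ 0 ∧ r = vnorm (A.mulVec x) / vnorm x}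
      (Real.sqrt ((n / m : ℝ) * σmax)) := by
  classical
  obtain ⟨⟨v, hv0, hveq⟩, hub⟩ := hσ
  have hherm : (Aᵀ * A).IsHermitian := by
    simpa using Matrix.isHermitian_conjTranspose_mul_self A
  have hEig : ∀ i : Fin n, hherm.eigenvalues i ≤ σmax := by
    intro i
    apply hub
    refine ⟨⇑(hherm.eigenvectorBasis i), ?_, hherm.mulVec_eigenvectorBasis i⟩
    have hne := hherm.eigenvectorBasis.orthonormal.ne_zero i
    intro h; apply hne; ext j; exact congrFun h j
  have hquad : ∀ y : Fin n → ℝ, y ⬝ᵥ (Aᵀ * A).mulVec y ≤ σmax * (y ⬝ᵥ y) :=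
    fun y => quad_le _ hherm σmax hEig y
  have hvv : (0:ℝ) < ∑ i, v i ^ 2 := by
    obtain ⟨i, hi⟩ := Function.ne_iff.1 hv0
    exact Finset.sum_pos' (fun j _ => sq_nonneg _)
      ⟨i, Finset.mem_univ i, lt_of_le_of_ne (sq_nonneg _) (Ne.symm (pow_ne_zero _ hi))⟩
  have hAv : ∑ i, (A.mulVec v) i ^ 2 = σmax * ∑ i, v i ^ 2 := by
    rw [← dot_sq_eq, ← dot_sq_eq, mulVec_dot, hveq]
    simp [dotProduct_smul, smul_eq_mul]
  have hσ0 : 0 ≤ σmax := by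
    by_contra hneg
    push_neg at hneg
    have h2 : σmax * ∑ i, v i ^ 2 < 0 := mul_neg_of_neg_of_pos hneg hvv
    have h3 : (0:ℝ) ≤ ∑ i, (A.mulVec v) i ^ 2 := Finset.sum_nonneg fun _ _ => sq_nonneg _
    linarith [hAv]
  set C := Real.sqrt ((n / m : ℝ) * σmax) with hC
  have hC0 : 0 ≤ C := Real.sqrt_nonneg _
  have hbound : ∀ y : Fin n → ℝ, vnorm (A.mulVec y) ≤ C * vnorm y :=
    mulVec_vnorm_le m n hm hn A σmax hσ0 hquad
  have hvpos : 0 < vnorm v := vnorm_pos hn v hv0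
  have heq : vnorm (A.mulVec v) = C * vnorm v := by
    unfold vnorm
    rw [hAv]
    rw [show (1/(m:ℝ)) * (σmax * ∑ i, v i ^ 2)
        = ((n/m:ℝ)*σmax) * ((1/(n:ℝ)) * ∑ i, v i ^ 2) from by
      have hm' : (m:ℝ) ≠ 0 := by positivity
      have hn' : (n:ℝ) ≠ 0 := by positivity
      field_simp]
    rw [Real.sqrt_mul (by positivity)]
  have hratio : vnorm (A.mulVec v) / vnorm v = C := by
    rw [heq, mul_div_assoc, div_self (ne_of_gt hvpos), mul_one]
  constructor
  · apply IsGreatest.isLUB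
    constructor
    · exact ⟨n, hn, v, hv0, by rw [dkstp_self m n hn A v, hratio]⟩
    · rintro r ⟨p, hp, x, hx0, rfl⟩
      have ht0 : 0 < Nat.lcm n p := Nat.lcm_pos hn hp
      have hd : Nat.lcm n p = n * (Nat.lcm n p / n) :=
        (Nat.mul_div_cancel' (Nat.dvd_lcm_left n p)).symm
      have he : Nat.lcm n p = p * (Nat.lcm n p / p) :=
        (Nat.mul_div_cancel' (Nat.dvd_lcm_right n p)).symm
      have hd0 : 0 < Nat.lcm n p / n :=
        Nat.div_pos (Nat.le_of_dvd ht0 (Nat.dvd_lcm_left n p)) hn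
      have he0 : 0 < Nat.lcm n p / p :=
        Nat.div_pos (Nat.le_of_dvd ht0 (Nat.dvd_lcm_right n p)) hp
      rw [dkstp_eq m n p hn hp A x _ _ hd he hd0 he0]
      rw [div_le_iff₀ (vnorm_pos hp x hx0)]
      calc vnorm (A.mulVec _) ≤ C * vnorm _ := hbound _
        _ ≤ C * vnorm x := mul_le_mul_of_nonneg_left
            (vnorm_blocksum_le n p hn hp x _ _ hd he hd0 he0) hC0
  · apply IsGreatest.isLUB
    refine ⟨⟨v, hv0, hratio.symm⟩, ?_⟩
    rintro r ⟨x, hx0, rfl⟩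
    rw [div_le_iff₀ (vnorm_pos hn x hx0)]
    exact hbound x
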